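/- Let k ≥ 1 and w > 0 with λ = w(1+w)^k, and let f(x) = -(w/(1+w))·ln(1 + w·e^{-x}). For any reals L₁ ≤ 0 ≤ L₀ with L₁ ≥ -k·ln(1+w), we have 0 ≤ f(L₀) - f(L₁) ≤ (L₀ - L₁)·(w/(k(1+w)))·(ln(1+λ)/ln(1+w) - 1). -/

import Mathlib

theorem stmt_15 (k : ℕ) (hk : 1 ≤ k) (w : ℝ) (hw : 0 < w)
    (lam : ℝ) (hlam : lam = w * (1 + w) ^ k)
    (f : ℝ → ℝ)
    (hf : f = fun x => -(w / (1 + w)) * Real.log (1 + w * Real.exp (-x)))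
    (L₀ L₁ : ℝ) (hL₁0 : L₁ ≤ 0) (h0L₀ : 0 ≤ L₀) (hL₁low : -(k * Real.log (1 + w)) ≤ L₁) :
    0 ≤ f L₀ - f L₁ ∧
    f L₀ - f L₁ ≤ (L₀ - L₁) * (w / (k * (1 + w))) *
      (Real.log (1 + lam) / Real.log (1 + w) - 1) := by
  have hw1 : (0:ℝ) < 1 + w := by linarith
  set c : ℝ := w / (1 + w) with hc
  have hc0 : 0 ≤ c := by positivity
  -- positivity of inner arg
  have hpos : ∀ x : ℝ, 0 < 1 + w * Real.exp (-x) := fun x => by positivity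
  -- derivative of f
  have hderiv : ∀ x : ℝ, HasDerivAt f (c * w / (Real.exp x + w)) x := by
    intro x
    have h1 : HasDerivAt (fun x : ℝ => -x) (-1) x := (hasDerivAt_id x).neg
    have h2 : HasDerivAt (fun x : ℝ => Real.exp (-x)) (Real.exp (-x) * (-1)) x := h1.exp
    have h3 : HasDerivAt (fun x : ℝ => 1 + w * Real.exp (-x))
        (w * (Real.exp (-x) * (-1))) x := (h2.const_mul w).const_add 1
    have h4 := (h3.log (hpos x).ne').const_mul (-c)
    rw [hf]
    refine h4.congr_deriv ?_
    have he : Real.exp x ≠ 0 := (Real.exp_pos x).ne'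
    have he2 : (0:ℝ) < Real.exp x + w := by positivity
    have he3 := (hpos x).ne'
    rw [Real.exp_neg] at he3 ⊢
    field_simp
  have hdiff : Differentiable ℝ f := fun x => (hderiv x).differentiableAt
  have hderiveq : deriv f = fun x => c * w / (Real.exp x + w) := by
    funext x; exact (hderiv x).deriv
  have hanti : Antitone (deriv f) := by
    rw [hderiveq]
    intro a b hab
    have : Real.exp a + w ≤ Real.exp b + w := by
      have := Real.exp_le_exp.2 hab; linarith
    apply div_le_div_of_nonneg_left (by positivity) (by positivity) this
  have hconc : ConcaveOn ℝ Set.univ f := hanti.concaveOn_univ_of_deriv hdiff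
  -- monotonicity of f
  have hmono : Monotone f := by
    intro a b hab
    have hlog : Real.log (1 + w * Real.exp (-b)) ≤ Real.log (1 + w * Real.exp (-a)) := by
      apply Real.log_le_log (hpos b)
      have := Real.exp_le_exp.2 (neg_le_neg hab)
      nlinarith
    rw [hf]
    simp only
    nlinarith [mul_nonneg hc0 (sub_nonneg.2 hlog)]
  set m : ℝ := k * Real.log (1 + w) with hmdef
  have hlogw : 0 < Real.log (1 + w) := Real.log_pos (by linarith)
  have hk0 : (0:ℝ) < k := by exact_mod_cast hk
  have hm : 0 < m := by positivity
  have hmono01 : 0 ≤ f L₀ - f L₁ := sub_nonneg.2 (hmono (hL₁0.trans h0L₀))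
  refine ⟨hmono01, ?_⟩
  -- value of f at -m and 0
  have hexpm : Real.exp m = (1 + w) ^ k := by
    rw [hmdef, Real.exp_nat_mul, Real.exp_log hw1]
  have hfm : f (-m) = -c * Real.log (1 + lam) := by
    rw [hf]; simp only [neg_neg, hexpm, hlam]
  have hf0 : f 0 = -c * Real.log (1 + w) := by
    rw [hf]; simp
  -- the target constant equals the secant slope over [-m, 0]
  have hC : (f 0 - f (-m)) / m
      = (w / (k * (1 + w))) * (Real.log (1 + lam) / Real.log (1 + w) - 1) := by
    rw [hfm, hf0, hmdef, hc]
    field_simp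
    ring
  by_cases hcase : L₁ = L₀
  · have h0 : L₀ = 0 := le_antisymm (hcase ▸ hL₁0) h0L₀
    rw [hcase, h0]
    simp
  have hlt : L₁ < L₀ := lt_of_le_of_ne (hL₁0.trans h0L₀) hcase
  have hcvx := hconc.neg
  -- step 1 : slope(L₀,L₁) ≤ slope(L₀,-m)
  have hs1 := hcvx.secant_mono (a := L₀) (x := -m) (y := L₁)
    (Set.mem_univ _) (Set.mem_univ _) (Set.mem_univ _)
    (by intro h; linarith) (ne_of_lt hlt) hL₁low
  -- step 2 : slope(-m,L₀) ≤ slope(-m,0)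
  have hs2 := hcvx.secant_mono (a := -m) (x := 0) (y := L₀)
    (Set.mem_univ _) (Set.mem_univ _) (Set.mem_univ _)
    (by intro h; linarith) (by intro h; linarith) h0L₀
  simp only [Pi.neg_apply] at hs1 hs2
  have key : (f L₀ - f L₁) / (L₀ - L₁) ≤ (f 0 - f (-m)) / m := by
    have e1 : (-f L₁ - -f L₀) / (L₁ - L₀) = -((f L₀ - f L₁) / (L₀ - L₁)) := by
      rw [show -f L₁ - -f L₀ = f L₀ - f L₁ by ring, show L₁ - L₀ = -(L₀ - L₁) by ring, div_neg]
    have e2 : (-f (-m) - -f L₀) / (-m - L₀) = -((f L₀ - f (-m)) / (L₀ + m)) := by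
      rw [show -f (-m) - -f L₀ = f L₀ - f (-m) by ring, show -m - L₀ = -(L₀ + m) by ring, div_neg]
    have e3 : (-f L₀ - -f (-m)) / (L₀ - -m) = -((f L₀ - f (-m)) / (L₀ + m)) := by
      rw [show -f L₀ - -f (-m) = -(f L₀ - f (-m)) by ring, show L₀ - -m = L₀ + m by ring, neg_div]
    have e4 : (-f 0 - -f (-m)) / (0 - -m) = -((f 0 - f (-m)) / m) := by
      rw [show -f 0 - -f (-m) = -(f 0 - f (-m)) by ring, show (0:ℝ) - -m = m by ring, neg_div]
    rw [e1, e2] at hs1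
    rw [e3, e4] at hs2
    linarith
  rw [hC] at key
  have hpos' : 0 < L₀ - L₁ := by linarith
  calc f L₀ - f L₁ = (L₀ - L₁) * ((f L₀ - f L₁) / (L₀ - L₁)) := by
        field_simp
    _ ≤ (L₀ - L₁) * ((w / (k * (1 + w))) * (Real.log (1 + lam) / Real.log (1 + w) - 1)) :=
        mul_le_mul_of_nonneg_left key hpos'.le
    _ = (L₀ - L₁) * (w / (k * (1 + w))) * (Real.log (1 + lam) / Real.log (1 + w) - 1) := by
        ring
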